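/- Suppose a group G admits a Hausdorff, extremally disconnected, totally bounded, left-invariant topology τ. Then the topology τ_s on G generated by the base {U \ A : U ∈ τ, A ⊆ G small} is a Hausdorff, extremally disconnected, totally bounded, left-invariant topology, and the family of nowhere dense subsets of (G, τ_s) coincides with the family S of all small subsets of G. -/

import Mathlib

open scoped Pointwise Topology

/-- A subset `A` of a group `G` is *large* if `F * A = G` for some finite `F ⊆ G`. -/
def IsLarge {G : Type*} [Group G] (A : Set G) : Prop :=
  ∃ F : Finset G, (F : Set G) * A = Set.univ

/-- A subset `A` of a group `G` is *small* if `B \ A` is large for every large `B ⊆ G`. -/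
def IsSmallSet {G : Type*} [Group G] (A : Set G) : Prop :=
  ∀ B : Set G, IsLarge B → IsLarge (B \ A)

/-- A topology on a group `G` is *left-invariant* if every left translation
`x ↦ g * x` is a homeomorphism. -/
def IsLeftInvariantTop {G : Type*} [Group G] (t : TopologicalSpace G) : Prop :=
  ∀ g : G, @IsHomeomorph G G t t (fun x => g * x)

/-- A topology on a group `G` is *totally bounded* if every nonempty open set is large. -/
def IsTotallyBoundedTop {G : Type*} [Group G] (t : TopologicalSpace G) : Prop :=
  ∀ U : Set G, IsOpen[t] U → U.Nonempty → IsLarge U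

section Small
variable {G : Type*} [Group G] {A B : Set G} {g : G}

lemma isLarge_mono (h : A ⊆ B) (hA : IsLarge A) : IsLarge B := by
  obtain ⟨F, hF⟩ := hA
  refine ⟨F, Set.eq_univ_of_univ_subset ?_⟩
  rw [← hF]
  exact Set.mul_subset_mul_left h

lemma isLarge_univ : IsLarge (Set.univ : Set G) := ⟨{1}, by simp⟩

lemma not_isLarge_empty : ¬ IsLarge (∅ : Set G) := by
  rintro ⟨F, hF⟩
  simp [Set.mul_empty] at hF
  exact Set.empty_ne_univ hF

lemma IsLarge.nonempty (hA : IsLarge A) : A.Nonempty := by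
  rcases A.eq_empty_or_nonempty with h | h
  · exact absurd (h ▸ hA) not_isLarge_empty
  · exact h

lemma not_small_of_large (hA : IsLarge A) (hs : IsSmallSet A) : False := by
  have := hs A hA
  simp at this
  exact not_isLarge_empty this

lemma isSmallSet_mono (h : A ⊆ B) (hB : IsSmallSet B) : IsSmallSet A := by
  intro C hC
  exact isLarge_mono (Set.diff_subset_diff_right h) (hB C hC)

lemma isSmallSet_empty : IsSmallSet (∅ : Set G) := by
  intro C hC; simpa using hC

lemma IsSmallSet.union (hA : IsSmallSet A) (hB : IsSmallSet B) : IsSmallSet (A ∪ B) := by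
  intro C hC
  have := hB _ (hA C hC)
  rwa [Set.diff_diff] at this

lemma isLarge_singleton_mul_of (hA : IsLarge A) : IsLarge ({g} * A) := by
  obtain ⟨F, hF⟩ := hA
  classical
  refine ⟨F * {g⁻¹}, ?_⟩
  push_cast
  rw [mul_assoc, ← mul_assoc ({g⁻¹} : Set G), Set.singleton_mul_singleton]
  simpa using hF

lemma isLarge_singleton_mul : IsLarge ({g} * A) ↔ IsLarge A := by
  constructor
  · intro h
    have := isLarge_singleton_mul_of (g := g⁻¹) h
    rwa [← mul_assoc, Set.singleton_mul_singleton, inv_mul_cancel, Set.singleton_one, one_mul] at this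
  · exact isLarge_singleton_mul_of

lemma singleton_mul_diff : {g} * (B \ A) = ({g} * B) \ ({g} * A) := by
  simp only [Set.singleton_mul]
  exact Set.image_diff (mul_right_injective g) _ _

lemma IsSmallSet.singleton_mul (hA : IsSmallSet A) : IsSmallSet ({g} * A) := by
  intro C hC
  have h1 : IsLarge ({g⁻¹} * C) := isLarge_singleton_mul.2 hC
  have h2 := hA _ h1
  have h3 : IsLarge ({g} * (({g⁻¹} * C) \ A)) := isLarge_singleton_mul_of h2
  rw [singleton_mul_diff, ← mul_assoc, Set.singleton_mul_singleton, mul_inv_cancel,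
    Set.singleton_one, one_mul] at h3
  exact h3

lemma IsSmallSet.finset_mul (hA : IsSmallSet A) (F : Finset G) :
    IsSmallSet ((F : Set G) * A) := by
  classical
  induction F using Finset.induction_on with
  | empty => simpa [Set.empty_mul] using isSmallSet_empty
  | insert _ _ h ih =>
      rename_i a F'
      rw [Finset.coe_insert, Set.insert_eq, Set.union_mul]
      exact (hA.singleton_mul).union ih

lemma isLarge_of_finset_mul {F : Finset G} (h : IsLarge ((F : Set G) * A)) : IsLarge A := by
  classical
  obtain ⟨F₁, hF₁⟩ := h
  exact ⟨F₁ * F, by push_cast; rwa [mul_assoc]⟩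

lemma isSmallSet_iff :
    IsSmallSet A ↔ ∀ F : Finset G, IsLarge (Set.univ \ ((F : Set G) * A)) := by
  constructor
  · intro hA F
    exact (hA.finset_mul F) Set.univ isLarge_univ
  · intro h B hB
    obtain ⟨F₀, hF₀⟩ := hB
    apply isLarge_of_finset_mul (F := F₀)
    refine isLarge_mono ?_ (h F₀)
    intro x hx
    have hxu : x ∈ (F₀ : Set G) * B := by rw [hF₀]; trivial
    obtain ⟨f, hf, b, hb, rfl⟩ := hxu
    refine ⟨f, hf, b, ⟨hb, fun hbA => hx.2 ⟨f, hf, b, hbA, rfl⟩⟩, rfl⟩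

end Small

section Wrappers

variable {X : Type*}

private lemma isOpenUniv' (τ : TopologicalSpace X) : IsOpen[τ] Set.univ := by
  letI := τ; exact isOpen_univ

private lemma clMin (τ : TopologicalSpace X) {s u : Set X} (h : s ⊆ u) (hc : IsClosed[τ] u) :
    @closure X τ s ⊆ u := by
  letI := τ; exact closure_minimal h hc

private lemma subsetCl (τ : TopologicalSpace X) {s : Set X} : s ⊆ @closure X τ s := by
  letI := τ; exact subset_closure

private lemma clClosed (τ : TopologicalSpace X) {s : Set X} : IsClosed[τ] (@closure X τ s) := by
  letI := τ; exact isClosed_closure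

private lemma clMono (τ : TopologicalSpace X) {s u : Set X} (h : s ⊆ u) :
    @closure X τ s ⊆ @closure X τ u := by
  letI := τ; exact closure_mono h

private lemma memCl (τ : TopologicalSpace X) {s : Set X} {x : X} :
    x ∈ @closure X τ s ↔ ∀ O : Set X, IsOpen[τ] O → x ∈ O → (O ∩ s).Nonempty := by
  letI := τ; exact mem_closure_iff

private lemma clEqSelf (τ : TopologicalSpace X) {s : Set X} (h : IsClosed[τ] s) :
    @closure X τ s = s := by
  letI := τ; exact h.closure_eq

private lemma intEmptyIffDense (τ : TopologicalSpace X) {s : Set X} :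
    @interior X τ s = ∅ ↔ @Dense X τ sᶜ := by
  letI := τ; exact interior_eq_empty_iff_dense_compl

private lemma denseNonempty (τ : TopologicalSpace X) [Nonempty X] {s : Set X}
    (h : @Dense X τ s) : s.Nonempty := by
  letI := τ; exact h.nonempty

private lemma denseUniv (τ : TopologicalSpace X) : @Dense X τ Set.univ := by
  letI := τ; exact dense_univ

private lemma denseInterOpenLeft (τ : TopologicalSpace X) {s u : Set X} (hs : @Dense X τ s)
    (hu : @Dense X τ u) (ho : IsOpen[τ] s) : @Dense X τ (s ∩ u) := by
  letI := τ; exact hs.inter_of_isOpen_left hu ho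

private lemma densePreimage (τ : TopologicalSpace X) {f : X → X} {s : Set X}
    (hs : @Dense X τ s) (hf : @IsOpenMap X X τ τ f) : @Dense X τ (f ⁻¹' s) := by
  letI := τ; exact hs.preimage hf

private lemma isOpenInter (τ : TopologicalSpace X) {s u : Set X} (hs : IsOpen[τ] s)
    (hu : IsOpen[τ] u) : IsOpen[τ] (s ∩ u) := by
  letI := τ; exact hs.inter hu

private lemma isOpenSUnion (τ : TopologicalSpace X) {S : Set (Set X)}
    (h : ∀ s ∈ S, IsOpen[τ] s) : IsOpen[τ] (⋃₀ S) := by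
  letI := τ; exact isOpen_sUnion h

private lemma intSubset (τ : TopologicalSpace X) {s : Set X} : @interior X τ s ⊆ s := by
  letI := τ; exact interior_subset

private lemma isOpenInt (τ : TopologicalSpace X) {s : Set X} : IsOpen[τ] (@interior X τ s) := by
  letI := τ; exact isOpen_interior

end Wrappers

section Top

variable {G : Type*} [Group G] (t : TopologicalSpace G)

abbrev genS (t : TopologicalSpace G) : Set (Set G) :=
  {S : Set G | ∃ U A : Set G, IsOpen[t] U ∧ IsSmallSet A ∧ S = U \ A}

abbrev tS (t : TopologicalSpace G) : TopologicalSpace G :=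
  TopologicalSpace.generateFrom (genS t)

lemma isOpen_tS_of_mem {S : Set G} (h : S ∈ genS t) : IsOpen[tS t] S :=
  TopologicalSpace.isOpen_generateFrom_of_mem h

lemma isOpen_tS_of_t {U : Set G} (h : IsOpen[t] U) : IsOpen[tS t] U :=
  isOpen_tS_of_mem t ⟨U, ∅, h, isSmallSet_empty, by simp⟩

lemma tS_le : tS t ≤ t := by
  intro U hU
  exact isOpen_tS_of_t t hU

lemma isBasis_genS : @TopologicalSpace.IsTopologicalBasis G (tS t) (genS t) := by
  letI := tS t
  refine ⟨?_, ?_, rfl⟩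
  · rintro S₁ ⟨U₁, A₁, hU₁, hA₁, rfl⟩ S₂ ⟨U₂, A₂, hU₂, hA₂, rfl⟩ x hx
    refine ⟨(U₁ ∩ U₂) \ (A₁ ∪ A₂), ⟨U₁ ∩ U₂, A₁ ∪ A₂, isOpenInter t hU₁ hU₂, hA₁.union hA₂, rfl⟩,
      ⟨⟨hx.1.1, hx.2.1⟩, fun hc => hc.elim hx.1.2 hx.2.2⟩, ?_⟩
    intro y hy
    exact ⟨⟨hy.1.1, fun h => hy.2 (Or.inl h)⟩, ⟨hy.1.2, fun h => hy.2 (Or.inr h)⟩⟩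
  · apply Set.eq_univ_of_univ_subset
    exact Set.subset_sUnion_of_mem ⟨Set.univ, ∅, isOpenUniv' t, isSmallSet_empty, by simp⟩

lemma totBdd_tS (hTB : IsTotallyBoundedTop t) : IsTotallyBoundedTop (tS t) := by
  letI := tS t
  intro U hU hne
  obtain ⟨x, hx⟩ := hne
  obtain ⟨V, ⟨V', A, hV', hA, rfl⟩, hxV, hVU⟩ := ((isBasis_genS t).isOpen_iff).1 hU x hx
  exact isLarge_mono hVU (hA V' (hTB V' hV' ⟨x, hxV.1⟩))

lemma continuous_mulLeft_tS (hLI : IsLeftInvariantTop t) (g : G) :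
    Continuous[tS t, tS t] (fun x => g * x) := by
  letI := tS t
  rw [continuous_generateFrom_iff]
  rintro S ⟨U, A, hU, hA, rfl⟩
  have hpre : ∀ X : Set G, (fun x => g * x) ⁻¹' X = {g⁻¹} * X := by
    intro X
    ext x
    simp only [Set.mem_preimage, Set.singleton_mul, Set.mem_image]
    constructor
    · intro h; exact ⟨g * x, h, by simp [← mul_assoc]⟩
    · rintro ⟨b, hb, rfl⟩; simpa [← mul_assoc] using hb
  have hdiff : (fun x => g * x) ⁻¹' (U \ A) = ({g⁻¹} * U) \ ({g⁻¹} * A) := by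
    rw [Set.preimage_diff, hpre, hpre]
  rw [hdiff]
  refine isOpen_tS_of_mem t ⟨{g⁻¹} * U, {g⁻¹} * A, ?_, hA.singleton_mul, rfl⟩
  rw [Set.singleton_mul]
  exact @IsHomeomorph.isOpenMap G G t t _ (hLI g⁻¹) U hU

lemma leftInv_tS (hLI : IsLeftInvariantTop t) : IsLeftInvariantTop (tS t) := by
  letI := tS t
  intro g
  refine ⟨continuous_mulLeft_tS t hLI g, ?_, Group.mulLeft_bijective g⟩
  intro U hU
  have himg : (fun x => g * x) '' U = (fun x => g⁻¹ * x) ⁻¹' U :=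
    congrFun (Set.image_eq_preimage_of_inverse (fun x => by simp [← mul_assoc])
      (fun x => by simp [← mul_assoc])) U
  rw [himg]
  exact (continuous_mulLeft_tS t hLI g⁻¹).isOpen_preimage U hU

lemma closure_tS_eq (hTB : IsTotallyBoundedTop t) {W : Set G} (hW : IsOpen[tS t] W) :
    @closure G (tS t) W = @closure G t W := by
  letI := tS t
  apply subset_antisymm
  · exact closure_minimal (subsetCl t) ⟨isOpen_tS_of_t t (clClosed t).isOpen_compl⟩
  · intro x hx
    rw [mem_closure_iff]
    intro O hO hxO
    obtain ⟨S, ⟨V, A, hV, hA, rfl⟩, hxS, hSO⟩ := ((isBasis_genS t).isOpen_iff).1 hO x hxO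
    have hVW : (V ∩ W).Nonempty := (memCl t).1 hx V hV hxS.1
    obtain ⟨y, hyV, hyW⟩ := hVW
    have hVWopen : IsOpen[tS t] (V ∩ W) := (isOpen_tS_of_t t hV).inter hW
    obtain ⟨S', ⟨U', A', hU', hA', rfl⟩, hyS', hS'VW⟩ :=
      ((isBasis_genS t).isOpen_iff).1 hVWopen y ⟨hyV, hyW⟩
    have hlarge : IsLarge (U' \ (A' ∪ A)) := (hA'.union hA) U' (hTB U' hU' ⟨y, hyS'.1⟩)
    obtain ⟨z, hz⟩ := hlarge.nonempty
    have hz' : z ∈ V ∩ W := hS'VW ⟨hz.1, fun h => hz.2 (Or.inl h)⟩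
    exact ⟨z, hSO ⟨hz'.1, fun h => hz.2 (Or.inr h)⟩, hz'.2⟩

lemma closure_t_isOpen (hTB : IsTotallyBoundedTop t) (hED : @ExtremallyDisconnected G t)
    {W : Set G} (hW : IsOpen[tS t] W) : IsOpen[t] (@closure G t W) := by
  letI := tS t
  set V := ⋃₀ {U : Set G | IsOpen[t] U ∧ ∃ A, IsSmallSet A ∧ U \ A ⊆ W} with hV
  have hVopen : IsOpen[t] V := isOpenSUnion t (fun U hU => hU.1)
  have hWV : W ⊆ V := by
    intro x hx
    obtain ⟨S, ⟨U, A, hU, hA, rfl⟩, hxS, hSW⟩ := ((isBasis_genS t).isOpen_iff).1 hW x hx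
    exact ⟨U, ⟨hU, A, hA, hSW⟩, hxS.1⟩
  have hVcl : V ⊆ @closure G t W := by
    rintro x ⟨U, ⟨hU, A, hA, hUAW⟩, hxU⟩
    rw [memCl t]
    intro O hO hxO
    have hlg : IsLarge ((O ∩ U) \ A) := hA _ (hTB _ (isOpenInter t hO hU) ⟨x, hxO, hxU⟩)
    obtain ⟨z, hz⟩ := hlg.nonempty
    exact ⟨z, hz.1.1, hUAW ⟨hz.1.2, hz.2⟩⟩
  have heq : @closure G t W = @closure G t V :=
    subset_antisymm (clMono t hWV) (clMin t hVcl (clClosed t))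
  rw [heq]
  exact hED.open_closure V hVopen

lemma ed_tS (hTB : IsTotallyBoundedTop t) (hED : @ExtremallyDisconnected G t) :
    @ExtremallyDisconnected G (tS t) := by
  letI := tS t
  refine ⟨fun U hU => ?_⟩
  rw [closure_tS_eq t hTB hU]
  exact isOpen_tS_of_t t (closure_t_isOpen t hTB hED hU)

lemma isClosed_tS_of_small {A : Set G} (hA : IsSmallSet A) : IsClosed[tS t] A :=
  letI := tS t
  ⟨isOpen_tS_of_mem t ⟨Set.univ, A, isOpenUniv' t, hA, Set.compl_eq_univ_diff A⟩⟩

lemma small_of_openDense (hTB : IsTotallyBoundedTop t) (hLI : IsLeftInvariantTop t)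
    {D : Set G} (hD : IsOpen[tS t] D) (hDd : @Dense G (tS t) D) : IsSmallSet Dᶜ := by
  letI := tS t
  haveI : Nonempty G := One.instNonempty
  rw [isSmallSet_iff]
  intro F
  have key : Set.univ \ ((F : Set G) * Dᶜ) = ⋂ f ∈ F, (fun x => f * x) '' D := by
    ext x
    simp only [Set.mem_diff, Set.mem_univ, true_and, Set.mem_mul, Set.mem_iInter,
      Set.mem_image, Finset.mem_coe, Set.mem_compl_iff]
    constructor
    · intro h f hf
      refine ⟨f⁻¹ * x, ?_, by simp [← mul_assoc]⟩
      by_contra hc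
      exact h ⟨f, hf, f⁻¹ * x, hc, by simp [← mul_assoc]⟩
    · rintro h ⟨f, hf, c, hc, rfl⟩
      obtain ⟨d, hd, hdx⟩ := h f hf
      exact hc ((mul_left_cancel hdx) ▸ hd)
  rw [key]
  have hsub : ∀ f : G, IsOpen[tS t] ((fun x => f * x) '' D) ∧
      @Dense G (tS t) ((fun x => f * x) '' D) := by
    intro f
    have himg : (fun x => f * x) '' D = (fun x => f⁻¹ * x) ⁻¹' D :=
      congrFun (Set.image_eq_preimage_of_inverse (fun x => by simp [← mul_assoc])
        (fun x => by simp [← mul_assoc])) D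
    rw [himg]
    exact ⟨(continuous_mulLeft_tS t hLI f⁻¹).isOpen_preimage D hD,
      hDd.preimage (leftInv_tS t hLI f⁻¹).isOpenMap⟩
  have main : ∀ F' : Finset G, IsOpen[tS t] (⋂ f ∈ F', (fun x => f * x) '' D) ∧
      @Dense G (tS t) (⋂ f ∈ F', (fun x => f * x) '' D) := by
    intro F'
    classical
    induction F' using Finset.induction_on with
    | empty => simp only [Finset.notMem_empty, Set.iInter_of_empty, Set.iInter_univ]
               exact ⟨isOpen_univ, dense_univ⟩
    | insert _ _ h ih =>
        rename_i a F''
        rw [Finset.set_biInter_insert]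
        exact ⟨(hsub a).1.inter ih.1, (hsub a).2.inter_of_isOpen_left ih.2 (hsub a).1⟩
  obtain ⟨hio, hid⟩ := main F
  exact totBdd_tS t hTB _ hio hid.nonempty

lemma small_iff_nwd (hTB : IsTotallyBoundedTop t) (hLI : IsLeftInvariantTop t) (A : Set G) :
    @interior G (tS t) (@closure G (tS t) A) = ∅ ↔ IsSmallSet A := by
  letI := tS t
  constructor
  · intro h
    have hd : @Dense G (tS t) (@closure G (tS t) A)ᶜ := interior_eq_empty_iff_dense_compl.1 h
    have hsmall : IsSmallSet ((@closure G (tS t) A)ᶜ)ᶜ :=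
      small_of_openDense t hTB hLI isClosed_closure.isOpen_compl hd
    rw [compl_compl] at hsmall
    exact isSmallSet_mono subset_closure hsmall
  · intro hA
    rw [(isClosed_tS_of_small t hA).closure_eq]
    by_contra hne
    obtain ⟨x, hx⟩ := Set.nonempty_iff_ne_empty.2 hne
    obtain ⟨S, ⟨U, B, hU, hB, rfl⟩, hxS, hSA⟩ :=
      ((isBasis_genS t).isOpen_iff).1 (isOpen_interior (s := A)) x hx
    have hlarge : IsLarge (U \ B) := hB U (hTB U hU ⟨x, hxS.1⟩)
    have hsmall : IsSmallSet (U \ B) :=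
      isSmallSet_mono (hSA.trans interior_subset) hA
    exact not_small_of_large hlarge hsmall

end Top


/-- If a group `G` carries a Hausdorff extremally disconnected totally bounded left-invariant
topology `τ`, then the topology `τ_s` generated by the base `{U \ A : U ∈ τ, A small}` is a
Hausdorff extremally disconnected totally bounded left-invariant topology whose nowhere dense
sets are exactly the small subsets of `G`. -/
theorem generated_topology_hausdorff_extremallyDisconnected_nowhereDense_eq_small
    {G : Type*} [Group G] (t : TopologicalSpace G)
    (hT2 : @T2Space G t) (hED : @ExtremallyDisconnected G t)
    (hTB : IsTotallyBoundedTop t) (hLI : IsLeftInvariantTop t) :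
    ∀ ts : TopologicalSpace G,
      ts = TopologicalSpace.generateFrom
        {S : Set G | ∃ U A : Set G, IsOpen[t] U ∧ IsSmallSet A ∧ S = U \ A} →
      @T2Space G ts ∧ @ExtremallyDisconnected G ts ∧
      IsTotallyBoundedTop ts ∧ IsLeftInvariantTop ts ∧
      {A : Set G | @interior G ts (@closure G ts A) = ∅} = {A : Set G | IsSmallSet A} := by
  intro ts hts
  subst hts
  refine ⟨t2Space_antitone (tS_le t) hT2, ed_tS t hTB hED, totBdd_tS t hTB, leftInv_tS t hLI, ?_⟩
  ext A
  simp only [Set.mem_setOf_eq]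
  exact small_iff_nwd t hTB hLI A
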